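/- There exist a constant C > 0 depending only on c₂, c₃ and a threshold D₀ ∈ ℕ such that the following holds. Let m ≥ D ≥ D₀ with m (log m)² ≤ D², let w_1, …, w_m ∈ ℝ^D be unit vectors satisfying (A2) with constant c₂ and (A3) with constant c₃, and let ŵ_1, …, ŵ_m ∈ ℝ^D be unit vectors with δ_max := max_{k∈[m]} min_{s∈{−1,1}} ‖s ŵ_k − w_k‖₂ ≤ D^{1/2}/(C m √(log m)); for each k let s_k ∈ {−1,1} attain this minimum. Then for n ∈ {2,3} the matrix G̃_n ∈ ℝ^{m×m} with entries (G̃_n)_{ℓk} = ⟨ŵ_ℓ, s_k w_k⟩^n is invertible with ‖G̃_n^{−1}‖ ≤ 3c₃ in operator norm. -/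

import Mathlib

open scoped BigOperators

noncomputable def opNorm {n : Type*} [Fintype n] [DecidableEq n] (A : Matrix n n ℝ) : ℝ :=
  ‖Matrix.toEuclideanCLM (𝕜 := ℝ) A‖

noncomputable def l2norm {d : ℕ} (v : Fin d → ℝ) : ℝ := Real.sqrt (∑ i, (v i) ^ 2)

def dot {d : ℕ} (v w : Fin d → ℝ) : ℝ := ∑ i, v i * w i

noncomputable def gram {D m : ℕ} (w : Fin m → Fin D → ℝ) (n : ℕ) :
    Matrix (Fin m) (Fin m) ℝ := Matrix.of fun k l => (dot (w k) (w l)) ^ n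

/- ## Auxiliary lemmas -/

section Aux

lemma euclid_apply {m : ℕ} (A : Matrix (Fin m) (Fin m) ℝ) (x : EuclideanSpace ℝ (Fin m)) (i : Fin m) :
    (Matrix.toEuclideanCLM (𝕜 := ℝ) A x) i = ∑ k, A i k * x k := by
  have := Matrix.ofLp_toEuclideanCLM (𝕜 := ℝ) A x
  have h2 : (WithLp.ofLp (Matrix.toEuclideanCLM (𝕜 := ℝ) A x)) i
      = (Matrix.toEuclideanCLM (𝕜 := ℝ) A x) i := rfl
  rw [this]
  simp [Matrix.toLin'_apply, Matrix.mulVec, dotProduct]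

lemma euclid_norm_sq {m : ℕ} (x : EuclideanSpace ℝ (Fin m)) :
    ‖x‖ = Real.sqrt (∑ i, (x i) ^ 2) := by
  rw [EuclideanSpace.norm_eq]
  congr 1
  exact Finset.sum_congr rfl fun i _ => by rw [Real.norm_eq_abs, sq_abs]

/-- operator norm is at most the Frobenius norm -/
lemma opNorm_le_frob {m : ℕ} (A : Matrix (Fin m) (Fin m) ℝ) :
    opNorm A ≤ Real.sqrt (∑ l, ∑ k, (A l k) ^ 2) := by
  refine ContinuousLinearMap.opNorm_le_bound _ (Real.sqrt_nonneg _) fun x => ?_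
  rw [euclid_norm_sq, euclid_norm_sq]
  rw [← Real.sqrt_mul (by positivity)]
  apply Real.sqrt_le_sqrt
  calc ∑ i, (Matrix.toEuclideanCLM (𝕜 := ℝ) A x i) ^ 2
      ≤ ∑ i, (∑ k, (A i k) ^ 2) * (∑ k, (x k) ^ 2) := by
        refine Finset.sum_le_sum fun i _ => ?_
        rw [euclid_apply]
        exact Finset.sum_mul_sq_le_sq_mul_sq _ _ _
    _ = (∑ l, ∑ k, (A l k) ^ 2) * ∑ k, (x k) ^ 2 := by rw [← Finset.sum_mul]

lemma opNorm_diag_le_one {m : ℕ} (d : Fin m → ℝ) (hd : ∀ k, d k = 1 ∨ d k = -1) :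
    opNorm (Matrix.diagonal d) ≤ 1 := by
  refine ContinuousLinearMap.opNorm_le_bound _ zero_le_one fun x => ?_
  rw [one_mul, euclid_norm_sq, euclid_norm_sq]
  apply Real.sqrt_le_sqrt
  refine le_of_eq (Finset.sum_congr rfl fun i _ => ?_)
  rw [euclid_apply]
  have : ∑ k, Matrix.diagonal d i k * x k = d i * x i := by
    rw [Finset.sum_eq_single i]
    · simp
    · intro b _ hb; simp [Matrix.diagonal_apply_ne' d hb]
    · simp
  rw [this, mul_pow]
  rcases hd i with h | h <;> rw [h] <;> ring

lemma opNorm_conj_diag {m : ℕ} (d : Fin m → ℝ) (hd : ∀ k, d k = 1 ∨ d k = -1)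
    (X : Matrix (Fin m) (Fin m) ℝ) :
    opNorm (Matrix.diagonal d * X * Matrix.diagonal d) ≤ opNorm X := by
  have h1 : opNorm (Matrix.diagonal d) ≤ 1 := opNorm_diag_le_one d hd
  have h0 : 0 ≤ opNorm X := norm_nonneg _
  have hd0 : 0 ≤ opNorm (Matrix.diagonal d) := norm_nonneg _
  unfold opNorm at h1 h0 hd0 ⊢
  rw [map_mul, map_mul]
  calc ‖Matrix.toEuclideanCLM (𝕜 := ℝ) (Matrix.diagonal d) * Matrix.toEuclideanCLM (𝕜 := ℝ) X *
        Matrix.toEuclideanCLM (𝕜 := ℝ) (Matrix.diagonal d)‖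
      ≤ ‖Matrix.toEuclideanCLM (𝕜 := ℝ) (Matrix.diagonal d) * Matrix.toEuclideanCLM (𝕜 := ℝ) X‖ *
        ‖Matrix.toEuclideanCLM (𝕜 := ℝ) (Matrix.diagonal d)‖ := norm_mul_le _ _
    _ ≤ (‖Matrix.toEuclideanCLM (𝕜 := ℝ) (Matrix.diagonal d)‖ *
        ‖Matrix.toEuclideanCLM (𝕜 := ℝ) X‖) * ‖Matrix.toEuclideanCLM (𝕜 := ℝ) (Matrix.diagonal d)‖ := by
        apply mul_le_mul_of_nonneg_right (norm_mul_le _ _) hd0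
    _ ≤ (1 * ‖Matrix.toEuclideanCLM (𝕜 := ℝ) X‖) * 1 := by
        apply mul_le_mul _ h1 hd0 (by positivity)
        exact mul_le_mul_of_nonneg_right h1 h0
    _ = ‖Matrix.toEuclideanCLM (𝕜 := ℝ) X‖ := by ring

lemma inverse_pert {R : Type*} [NormedRing R] [CompleteSpace R] (h1 : ‖(1 : R)‖ ≤ 1)
    {x t : R} {c : ℝ} (hc : 0 < c) (hx : IsUnit x)
    (hxi : ‖Ring.inverse x‖ ≤ c) (ht : ‖t‖ ≤ 2 / (3 * c)) :
    IsUnit (x + t) ∧ ‖Ring.inverse (x + t)‖ ≤ 3 * c := by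
  obtain ⟨u, rfl⟩ := hx
  rw [Ring.inverse_unit] at hxi
  set v : R := -(↑u⁻¹ * t) with hv
  have hvn : ‖v‖ ≤ 2 / 3 := by
    rw [hv, norm_neg]
    calc ‖(↑u⁻¹ : R) * t‖ ≤ ‖(↑u⁻¹ : R)‖ * ‖t‖ := norm_mul_le _ _
      _ ≤ c * (2 / (3 * c)) := by
          apply mul_le_mul hxi ht (norm_nonneg _) hc.le
      _ = 2 / 3 := by field_simp
  have hv1 : ‖v‖ < 1 := lt_of_le_of_lt hvn (by norm_num)
  set og : Rˣ := Units.oneSub v hv1 with hog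
  have hval : ((u * og : Rˣ) : R) = ↑u + t := by
    have h3 : ((og : Rˣ) : R) = 1 - v := rfl
    rw [Units.val_mul, h3, hv]
    calc (↑u : R) * (1 - -(↑u⁻¹ * t)) = ↑u + (↑u * ↑u⁻¹) * t := by noncomm_ring
      _ = ↑u + t := by rw [u.mul_inv, one_mul]
  constructor
  · exact hval ▸ (u * og).isUnit
  · rw [← hval, Ring.inverse_unit]
    have h2 : ((u * og)⁻¹ : Rˣ) = (og⁻¹ * u⁻¹ : Rˣ) := mul_inv_rev u og
    rw [h2, Units.val_mul]
    have hogi : ‖((og⁻¹ : Rˣ) : R)‖ ≤ 3 := by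
      have hval2 : ((og⁻¹ : Rˣ) : R) = ∑' n : ℕ, v ^ n := rfl
      rw [hval2]
      calc ‖∑' n : ℕ, v ^ n‖ ≤ ‖(1 : R)‖ - 1 + (1 - ‖v‖)⁻¹ :=
            tsum_geometric_le_of_norm_lt_one v hv1
        _ ≤ 0 + 3 := by
            have h13 : (1:ℝ)/3 ≤ 1 - ‖v‖ := by linarith
            have : (1 - ‖v‖)⁻¹ ≤ 3 := by
              rw [inv_le_comm₀ (by linarith) (by norm_num)]
              linarith
            linarith
        _ = 3 := by ring
    calc ‖((og⁻¹ : Rˣ) : R) * ((u⁻¹ : Rˣ) : R)‖ ≤ ‖((og⁻¹ : Rˣ) : R)‖ * ‖((u⁻¹ : Rˣ) : R)‖ :=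
          norm_mul_le _ _
      _ ≤ 3 * c := mul_le_mul hogi hxi (norm_nonneg _) (by norm_num)

variable {m : ℕ}

local notation "φ" => Matrix.toEuclideanCLM (n := Fin m) (𝕜 := ℝ)

lemma isUnit_phi_iff (A : Matrix (Fin m) (Fin m) ℝ) : IsUnit (φ A) ↔ IsUnit A := by
  constructor
  · intro h
    have := h.map (Matrix.toEuclideanCLM (n := Fin m) (𝕜 := ℝ)).symm
    simpa using this
  · intro h
    exact h.map _

lemma phi_ring_inverse (A : Matrix (Fin m) (Fin m) ℝ) :
    φ (Ring.inverse A) = Ring.inverse (φ A) := by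
  by_cases h : IsUnit A
  · obtain ⟨u, rfl⟩ := h
    rw [Ring.inverse_unit]
    set v : (EuclideanSpace ℝ (Fin m) →L[ℝ] EuclideanSpace ℝ (Fin m))ˣ :=
      ⟨φ ↑u, φ ↑u⁻¹, by rw [← map_mul, u.mul_inv, map_one],
        by rw [← map_mul, u.inv_mul, map_one]⟩ with hv
    have h1 : φ (↑u) = (v : _) := rfl
    rw [h1, Ring.inverse_unit]
    rfl
  · rw [Ring.inverse_non_unit _ h, Ring.inverse_non_unit, map_zero]
    rwa [isUnit_phi_iff]

lemma matrix_pert (G E : Matrix (Fin m) (Fin m) ℝ) (c : ℝ) (hc : 0 < c)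
    (hG : IsUnit G) (hGi : opNorm G⁻¹ ≤ c) (hE : opNorm E ≤ 2 / (3 * c)) :
    IsUnit (G + E) ∧ opNorm (G + E)⁻¹ ≤ 3 * c := by
  have h1 : ‖(1 : EuclideanSpace ℝ (Fin m) →L[ℝ] EuclideanSpace ℝ (Fin m))‖ ≤ 1 :=
    ContinuousLinearMap.norm_id_le
  have key := inverse_pert (R := EuclideanSpace ℝ (Fin m) →L[ℝ] EuclideanSpace ℝ (Fin m))
    h1 hc ((isUnit_phi_iff G).mpr hG) ?_ (t := φ E) hE
  · constructor
    · rw [← isUnit_phi_iff, map_add]; exact key.1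
    · rw [Matrix.nonsing_inv_eq_ringInverse]
      show ‖φ _‖ ≤ _
      rw [phi_ring_inverse, map_add]
      exact key.2
  · rw [Matrix.nonsing_inv_eq_ringInverse] at hGi
    show ‖Ring.inverse (φ G)‖ ≤ c
    rw [← phi_ring_inverse]
    exact hGi

lemma pert_pow_bound {n : ℕ} (hn : n = 2 ∨ n = 3) {a b d : ℝ}
    (ha : |a| ≤ 1) (hb : |b| ≤ d) (hd : d ≤ 1) :
    |(a + b) ^ n - a ^ n| ≤ 3 * d * (|a| + 2 * d) := by
  have hd0 : 0 ≤ d := le_trans (abs_nonneg b) hb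
  have ha0 : 0 ≤ |a| := abs_nonneg a
  have hbb : |b| * |b| ≤ d * d := mul_le_mul hb hb (abs_nonneg b) hd0
  have hab : |a| * |b| ≤ |a| * d := mul_le_mul_of_nonneg_left hb ha0
  have hsq : a ^ 2 = |a| ^ 2 := (sq_abs a).symm
  rcases hn with rfl | rfl
  · have h1 : (a + b) ^ 2 - a ^ 2 = b * (2 * a + b) := by ring
    rw [h1, abs_mul]
    calc |b| * |2 * a + b| ≤ d * (2 * |a| + d) := by
          apply mul_le_mul hb _ (abs_nonneg _) hd0
          calc |2 * a + b| ≤ |2 * a| + |b| := abs_add_le _ _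
            _ = 2 * |a| + |b| := by rw [abs_mul]; norm_num
            _ ≤ 2 * |a| + d := by linarith
      _ ≤ 3 * d * (|a| + 2 * d) := by nlinarith
  · have h1 : (a + b) ^ 3 - a ^ 3 = b * (3 * a ^ 2 + 3 * a * b + b ^ 2) := by ring
    rw [h1, abs_mul]
    have h2 : |3 * a ^ 2 + 3 * a * b + b ^ 2| ≤ 3 * a ^ 2 + 3 * |a| * |b| + b ^ 2 := by
      calc |3 * a ^ 2 + 3 * a * b + b ^ 2| ≤ |3 * a ^ 2 + 3 * a * b| + |b ^ 2| := abs_add_le _ _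
        _ ≤ |3 * a ^ 2| + |3 * a * b| + |b ^ 2| := by linarith [abs_add_le (3 * a ^ 2) (3 * a * b)]
        _ = 3 * a ^ 2 + 3 * |a| * |b| + b ^ 2 := by
            rw [abs_of_nonneg (by positivity : (0:ℝ) ≤ 3 * a ^ 2),
              abs_of_nonneg (sq_nonneg b)]
            congr 1
            rw [show (3:ℝ) * a * b = 3 * (a * b) by ring, abs_mul, abs_mul]
            simp [abs_of_nonneg]
            ring
    have h3 : 3 * a ^ 2 + 3 * |a| * |b| + b ^ 2 ≤ 3 * (|a| + 2 * d) := by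
      have hb2 : b ^ 2 ≤ d := by
        calc b ^ 2 = |b| * |b| := by rw [← abs_mul, abs_mul_self, sq]
          _ ≤ d * d := hbb
          _ ≤ d * 1 := by nlinarith
          _ = d := mul_one d
      have ha2 : a ^ 2 ≤ |a| := by rw [hsq]; nlinarith
      nlinarith
    calc |b| * |3 * a ^ 2 + 3 * a * b + b ^ 2| ≤ d * (3 * (|a| + 2 * d)) := by
          apply mul_le_mul hb (le_trans h2 h3) (abs_nonneg _) hd0
      _ = 3 * d * (|a| + 2 * d) := by ring

lemma sq_bound_helper {x a d : ℝ} (h : x ^ 2 ≤ (3 * d * (|a| + 2 * d)) ^ 2) :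
    x ^ 2 ≤ 18 * d ^ 2 * a ^ 2 + 72 * d ^ 4 := by
  nlinarith [sq_abs a, sq_nonneg (|a| - 2 * d), abs_nonneg a, sq_nonneg d]

lemma abs_le_of_sq_le' {x y : ℝ} (hy : 0 ≤ y) (h : x ^ 2 ≤ y ^ 2) : |x| ≤ y := by
  rw [← Real.sqrt_sq_eq_abs, ← Real.sqrt_sq hy]
  exact Real.sqrt_le_sqrt h

lemma arith_final (c₂ c₃ : ℝ) (hc₂ : 0 < c₂) (hc₃ : 0 < c₃) :
    (90 + 18 * c₂) / (30 * (1 + c₃ + c₂ * c₃)) ^ 2 ≤ 4 / (9 * c₃ ^ 2) := by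
  rw [div_le_div_iff₀ (by positivity) (by positivity)]
  nlinarith [sq_nonneg c₃, sq_nonneg (c₂ * c₃), mul_pos hc₂ hc₃, sq_nonneg (1 + c₃ + c₂ * c₃),
    mul_nonneg hc₂.le (sq_nonneg c₃), mul_nonneg (mul_nonneg hc₂.le hc₂.le) (sq_nonneg c₃)]

end Aux
/-- For `n ∈ {2,3}` the mixed Gram matrix `(G̃_n)_{ℓk} = ⟨ŵ_ℓ, s_k w_k⟩^n` is invertible
with `‖G̃_n⁻¹‖ ≤ 3c₃`. -/
theorem mixed_gram_invertible
    (c₂ c₃ : ℝ) (hc₂ : 0 < c₂) (hc₃ : 0 < c₃) :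
    ∃ C : ℝ, 0 < C ∧ ∃ D₀ : ℕ,
      ∀ (D m : ℕ), D₀ ≤ D → D ≤ m → (m : ℝ) * (Real.log m) ^ 2 ≤ (D : ℝ) ^ 2 →
      ∀ (w wh : Fin m → Fin D → ℝ) (s : Fin m → ℝ),
        (∀ k, ∑ i, (w k i) ^ 2 = 1) →
        (∀ k, ∑ i, (wh k i) ^ 2 = 1) →
        (∀ k l, k ≠ l → (dot (w k) (w l)) ^ 2 ≤ c₂ * Real.log m / D) →
        (∀ n : ℕ, 2 ≤ n → IsUnit (gram w n) ∧ opNorm (gram w n)⁻¹ ≤ c₃) →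
        (∀ k, s k = 1 ∨ s k = -1) →
        (∀ k, l2norm (s k • wh k - w k) = min (l2norm (wh k - w k)) (l2norm (wh k + w k))) →
        (∀ k, min (l2norm (wh k - w k)) (l2norm (wh k + w k)) ≤
            Real.sqrt D / (C * m * Real.sqrt (Real.log m))) →
        ∀ n : ℕ, n = 2 ∨ n = 3 →
          IsUnit (Matrix.of fun l k => (dot (wh l) (s k • w k)) ^ n) ∧
          opNorm (Matrix.of fun l k => (dot (wh l) (s k • w k)) ^ n)⁻¹ ≤ 3 * c₃ := by
  refine ⟨30 * (1 + c₃ + c₂ * c₃), by positivity, 3, ?_⟩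
  intro D m hD₀ hDm hmlog w wh s hw hwh h2 h3 hs hmin hδmax n hn
  have hn2 : 2 ≤ n := by rcases hn with rfl | rfl <;> norm_num
  set C : ℝ := 30 * (1 + c₃ + c₂ * c₃) with hC
  have hC1 : (1:ℝ) ≤ C := by nlinarith
  have hC0 : (0:ℝ) < C := by linarith
  clear_value C
  have hD3 : (3:ℝ) ≤ (D:ℝ) := by exact_mod_cast hD₀
  have hDmR : (D:ℝ) ≤ (m:ℝ) := by exact_mod_cast hDm
  have hm3 : (3:ℝ) ≤ (m:ℝ) := le_trans hD3 hDmR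
  have hD0 : (0:ℝ) < D := by linarith
  have hm0 : (0:ℝ) < m := by linarith
  set L : ℝ := Real.log m with hLdef
  have hL1 : 1 ≤ L := by
    rw [hLdef, Real.le_log_iff_exp_le hm0]
    have := Real.exp_one_lt_d9
    linarith
  have hL0 : (0:ℝ) < L := by linarith
  clear_value L
  have hsL1 : 1 ≤ Real.sqrt L := by
    rw [show (1:ℝ) = Real.sqrt 1 from (Real.sqrt_one).symm]
    exact Real.sqrt_le_sqrt hL1
  set δ : ℝ := Real.sqrt D / (C * m * Real.sqrt L) with hδdef
  have hden : (0:ℝ) < C * m * Real.sqrt L := by positivity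
  have hδ0 : 0 ≤ δ := by positivity
  have hδsq : δ ^ 2 = D / (C ^ 2 * m ^ 2 * L) := by
    rw [hδdef, div_pow, mul_pow, mul_pow, Real.sq_sqrt hD0.le, Real.sq_sqrt hL0.le]
  clear_value δ
  have hδ1 : δ ≤ 1 := by
    rw [hδdef, div_le_one hden]
    have h1 : Real.sqrt D ≤ (D:ℝ) := by
      rw [Real.sqrt_le_left hD0.le]
      nlinarith
    have hCL : 1 ≤ C * Real.sqrt L := by nlinarith
    have h3 : (m:ℝ) * 1 ≤ (m:ℝ) * (C * Real.sqrt L) := by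
      apply mul_le_mul_of_nonneg_left hCL hm0.le
    nlinarith
  have hδk : ∀ l, l2norm (s l • wh l - w l) ≤ δ := fun l => by
    rw [hmin l]; exact hδmax l
  -- basic dot product bounds
  have hdiag : ∀ k, dot (w k) (w k) = 1 := fun k => by
    have := hw k
    unfold dot
    calc ∑ i, w k i * w k i = ∑ i, (w k i) ^ 2 := by
          exact Finset.sum_congr rfl fun i _ => (sq (w k i)).symm
      _ = 1 := hw k
  have habs : ∀ k l, |dot (w k) (w l)| ≤ 1 := by
    intro k l
    apply abs_le_of_sq_le' zero_le_one
    have h := Finset.sum_mul_sq_le_sq_mul_sq Finset.univ (w k) (w l)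
    rw [hw k, hw l] at h
    simpa [dot] using h
  set e : Fin m → Fin D → ℝ := fun l => s l • wh l - w l with he
  have hb : ∀ l k, |dot (e l) (w k)| ≤ δ := by
    intro l k
    apply abs_le_of_sq_le' hδ0
    have h := Finset.sum_mul_sq_le_sq_mul_sq Finset.univ (e l) (w k)
    rw [hw k, mul_one] at h
    have h2' : ∑ i, (e l i) ^ 2 ≤ δ ^ 2 := by
      have hl2 : l2norm (e l) ≤ δ := hδk l
      have : ∑ i, (e l i) ^ 2 = (l2norm (e l)) ^ 2 := by
        rw [l2norm, Real.sq_sqrt (by positivity)]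
      rw [this]
      exact pow_le_pow_left₀ (Real.sqrt_nonneg _) hl2 2
    calc (dot (e l) (w k)) ^ 2 ≤ ∑ i, (e l i) ^ 2 := h
      _ ≤ δ ^ 2 := h2'
  -- matrices
  set G : Matrix (Fin m) (Fin m) ℝ := gram w n with hG
  set A : Matrix (Fin m) (Fin m) ℝ :=
    Matrix.of (fun l k => (dot (w l) (w k) + dot (e l) (w k)) ^ n) with hA
  set E : Matrix (Fin m) (Fin m) ℝ := A - G with hE
  have hGE : G + E = A := by rw [hE]; abel
  -- entrywise bound on E
  have hEb : ∀ l k, (E l k) ^ 2 ≤ 18 * δ ^ 2 * (dot (w l) (w k)) ^ 2 + 72 * δ ^ 4 := by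
    intro l k
    have hent : E l k = (dot (w l) (w k) + dot (e l) (w k)) ^ n - (dot (w l) (w k)) ^ n := by
      rw [hE, Matrix.sub_apply, hA, hG]
      rfl
    have h1 : |E l k| ≤ 3 * δ * (|dot (w l) (w k)| + 2 * δ) := by
      rw [hent]
      exact pert_pow_bound hn (habs l k) (hb l k) hδ1
    have h2' : (E l k) ^ 2 ≤ (3 * δ * (|dot (w l) (w k)| + 2 * δ)) ^ 2 := by
      rw [← sq_abs (E l k)]
      exact pow_le_pow_left₀ (abs_nonneg _) h1 2
    exact sq_bound_helper h2'
  -- row sums of squared dot products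
  set ρ : ℝ := c₂ * L / D with hρ
  clear_value ρ
  have hρ0 : 0 ≤ ρ := by rw [hρ]; positivity
  have hrow : ∀ l, ∑ k, (dot (w l) (w k)) ^ 2 ≤ 1 + m * ρ := by
    intro l
    rw [← Finset.add_sum_erase Finset.univ _ (Finset.mem_univ l)]
    have hdd : (dot (w l) (w l)) ^ 2 = 1 := by rw [hdiag l]; norm_num
    have hoff : ∑ k ∈ Finset.univ.erase l, (dot (w l) (w k)) ^ 2 ≤ m * ρ := by
      calc ∑ k ∈ Finset.univ.erase l, (dot (w l) (w k)) ^ 2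
          ≤ ∑ _k ∈ Finset.univ.erase l, ρ := by
            refine Finset.sum_le_sum fun k hk => ?_
            exact h2 l k (Finset.ne_of_mem_erase hk).symm
        _ = (Finset.univ.erase l).card * ρ := by rw [Finset.sum_const, nsmul_eq_mul]
        _ ≤ m * ρ := by
            apply mul_le_mul_of_nonneg_right _ hρ0
            have : (Finset.univ.erase l).card ≤ m := by
              calc (Finset.univ.erase l).card ≤ (Finset.univ : Finset (Fin m)).card :=
                    Finset.card_le_card (Finset.erase_subset _ _)
                _ = m := by simp
            exact_mod_cast this
    linarith
  -- total Frobenius bound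
  have hsum : ∑ l, ∑ k, (E l k) ^ 2 ≤ 18 * m * δ ^ 2 + 18 * m ^ 2 * δ ^ 2 * ρ + 72 * m ^ 2 * δ ^ 4 := by
    have hinner : ∀ l, ∑ k, (E l k) ^ 2 ≤ 18 * δ ^ 2 * (1 + m * ρ) + 72 * m * δ ^ 4 := by
      intro l
      calc ∑ k, (E l k) ^ 2
          ≤ ∑ k, (18 * δ ^ 2 * (dot (w l) (w k)) ^ 2 + 72 * δ ^ 4) :=
            Finset.sum_le_sum fun k _ => hEb l k
        _ = 18 * δ ^ 2 * (∑ k, (dot (w l) (w k)) ^ 2) + m * (72 * δ ^ 4) := by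
            rw [Finset.sum_add_distrib, ← Finset.mul_sum, Finset.sum_const, nsmul_eq_mul,
              Finset.card_univ, Fintype.card_fin]
        _ ≤ 18 * δ ^ 2 * (1 + m * ρ) + m * (72 * δ ^ 4) := by
            have h := hrow l
            have h18 : (0:ℝ) ≤ 18 * δ ^ 2 := by positivity
            have := mul_le_mul_of_nonneg_left h h18
            linarith
        _ = 18 * δ ^ 2 * (1 + m * ρ) + 72 * m * δ ^ 4 := by ring
    calc ∑ l, ∑ k, (E l k) ^ 2
        ≤ ∑ _l : Fin m, (18 * δ ^ 2 * (1 + m * ρ) + 72 * m * δ ^ 4) :=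
          Finset.sum_le_sum fun l _ => hinner l
      _ = m * (18 * δ ^ 2 * (1 + m * ρ) + 72 * m * δ ^ 4) := by
          rw [Finset.sum_const, nsmul_eq_mul, Finset.card_univ, Fintype.card_fin]
      _ = 18 * m * δ ^ 2 + 18 * m ^ 2 * δ ^ 2 * ρ + 72 * m ^ 2 * δ ^ 4 := by ring
  -- arithmetic
  have hP : (m:ℝ) * δ ^ 2 = (D:ℝ) / (C ^ 2 * m * L) := by
    rw [hδsq]; field_simp
  have hP1 : (m:ℝ) * δ ^ 2 ≤ 1 / C ^ 2 := by
    rw [hP, div_le_div_iff₀ (by positivity) (by positivity)]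
    have h4 : (m:ℝ) * 1 ≤ m * L := mul_le_mul_of_nonneg_left hL1 hm0.le
    have h5 : (D:ℝ) ≤ m * L := by linarith only [hDmR, h4]
    have h6 : (D:ℝ) * C ^ 2 ≤ (m * L) * C ^ 2 := mul_le_mul_of_nonneg_right h5 (sq_nonneg C)
    linarith only [h6]
  have hT2 : (m:ℝ) ^ 2 * δ ^ 2 * ρ = c₂ / C ^ 2 := by
    rw [hδsq, hρ]; field_simp
  have hT3 : (m:ℝ) ^ 2 * δ ^ 4 ≤ 1 / C ^ 2 := by
    have h1 : (m:ℝ) ^ 2 * δ ^ 4 = ((m:ℝ) * δ ^ 2) ^ 2 := by ring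
    rw [h1]
    calc ((m:ℝ) * δ ^ 2) ^ 2 ≤ (1 / C ^ 2) ^ 2 := by
          apply pow_le_pow_left₀ (by positivity) hP1
      _ ≤ 1 / C ^ 2 := by
          rw [div_pow, one_pow, div_le_div_iff₀ (by positivity) (by positivity)]
          have h7 : (1:ℝ) * C ^ 2 ≤ C ^ 2 * C ^ 2 := by
            have := mul_le_mul_of_nonneg_right (one_le_pow₀ hC1 (n := 2)) (sq_nonneg C)
            linarith only [this]
          linarith only [h7]
  have harith : 18 * m * δ ^ 2 + 18 * m ^ 2 * δ ^ 2 * ρ + 72 * m ^ 2 * δ ^ 4 ≤ 4 / (9 * c₃ ^ 2) := by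
    have hfin : (90 + 18 * c₂) / C ^ 2 ≤ 4 / (9 * c₃ ^ 2) := by
      rw [hC]
      exact arith_final c₂ c₃ hc₂ hc₃
    have : 18 * m * δ ^ 2 + 18 * m ^ 2 * δ ^ 2 * ρ + 72 * m ^ 2 * δ ^ 4
        ≤ (90 + 18 * c₂) / C ^ 2 := by
      have e1 : 18 * (m:ℝ) * δ ^ 2 ≤ 18 / C ^ 2 := by
        rw [div_eq_mul_one_div 18 (C^2)]; linarith only [hP1]
      have e2 : 18 * (m:ℝ) ^ 2 * δ ^ 2 * ρ = 18 * c₂ / C ^ 2 := by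
        rw [show 18 * (m:ℝ) ^ 2 * δ ^ 2 * ρ = 18 * ((m:ℝ) ^ 2 * δ ^ 2 * ρ) by ring, hT2]; ring
      have e3 : 72 * (m:ℝ) ^ 2 * δ ^ 4 ≤ 72 / C ^ 2 := by
        rw [div_eq_mul_one_div 72 (C^2)]; linarith only [hT3]
      have e4 : (18:ℝ) / C ^ 2 + 18 * c₂ / C ^ 2 + 72 / C ^ 2 = (90 + 18 * c₂) / C ^ 2 := by ring
      linarith only [e1, e2, e3, e4]
    linarith only [this, hfin]
  -- operator norm bound on E
  have hEop : opNorm E ≤ 2 / (3 * c₃) := by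
    have h23 : (0:ℝ) ≤ 2 / (3 * c₃) := by positivity
    calc opNorm E ≤ Real.sqrt (∑ l, ∑ k, (E l k) ^ 2) := opNorm_le_frob E
      _ ≤ Real.sqrt ((2 / (3 * c₃)) ^ 2) := by
          apply Real.sqrt_le_sqrt
          have : (2 / (3 * c₃)) ^ 2 = 4 / (9 * c₃ ^ 2) := by
            rw [div_pow]; norm_num; ring
          rw [this]
          exact le_trans hsum harith
      _ = 2 / (3 * c₃) := Real.sqrt_sq h23
  -- perturbation
  obtain ⟨hGu, hGi⟩ := h3 n hn2
  rw [← hG] at hGu hGi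
  have hpert := matrix_pert G E c₃ hc₃ hGu hGi hEop
  rw [hGE] at hpert
  obtain ⟨hAu, hAi⟩ := hpert
  -- diagonal sign matrix
  set dvec : Fin m → ℝ := fun k => (s k) ^ n with hdvec
  have hdv : ∀ k, dvec k = 1 ∨ dvec k = -1 := by
    intro k
    rcases hs k with h | h <;> rcases hn with rfl | rfl
    · left; simp only [hdvec]; rw [h]; norm_num
    · left; simp only [hdvec]; rw [h]; norm_num
    · left; simp only [hdvec]; rw [h]; norm_num
    · right; simp only [hdvec]; rw [h]; norm_num
  set Dg : Matrix (Fin m) (Fin m) ℝ := Matrix.diagonal dvec with hDg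
  have hDg2 : Dg * Dg = 1 := by
    rw [hDg, Matrix.diagonal_mul_diagonal]
    have : (fun k => dvec k * dvec k) = fun _ => (1:ℝ) := funext fun k => by
      rcases hdv k with h | h <;> rw [h] <;> norm_num
    rw [this, Matrix.diagonal_one]
  have hDgu : IsUnit Dg := ⟨⟨Dg, Dg, hDg2, hDg2⟩, rfl⟩
  have hDginv : Dg⁻¹ = Dg := Matrix.inv_eq_right_inv hDg2
  -- key identity
  have hM : (Matrix.of fun l k => (dot (wh l) (s k • w k)) ^ n) = Dg * A * Dg := by
    ext l k
    have hwsk : dot (wh l) (s k • w k) = s k * dot (wh l) (w k) := by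
      unfold dot
      rw [Finset.mul_sum]
      exact Finset.sum_congr rfl fun i _ => by simp [Pi.smul_apply, smul_eq_mul]; ring
    have hAent : dot (w l) (w k) + dot (e l) (w k) = s l * dot (wh l) (w k) := by
      have : dot (w l) (w k) + dot (e l) (w k) = dot (s l • wh l) (w k) := by
        unfold dot
        rw [← Finset.sum_add_distrib]
        exact Finset.sum_congr rfl fun i _ => by
          simp [he, Pi.smul_apply, Pi.sub_apply, smul_eq_mul]; ring
      rw [this]
      unfold dot
      rw [Finset.mul_sum]
      exact Finset.sum_congr rfl fun i _ => by simp [Pi.smul_apply, smul_eq_mul, mul_assoc]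
    have hDgA : (Dg * A * Dg) l k = dvec l * A l k * dvec k := by
      rw [hDg, Matrix.mul_diagonal, Matrix.diagonal_mul]
    rw [Matrix.of_apply, hDgA, hA, Matrix.of_apply, hAent, hwsk, hdvec]
    have hsl : s l ^ n * s l ^ n = 1 := by
      rw [← mul_pow]
      rcases hs l with h | h <;> rw [h] <;> norm_num
    calc (s k * dot (wh l) (w k)) ^ n = s k ^ n * dot (wh l) (w k) ^ n := mul_pow _ _ _
      _ = (s l ^ n * s l ^ n) * dot (wh l) (w k) ^ n * s k ^ n := by rw [hsl]; ring
      _ = s l ^ n * (s l * dot (wh l) (w k)) ^ n * s k ^ n := by rw [mul_pow]; ring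
  constructor
  · rw [hM]
    exact (hDgu.mul hAu).mul hDgu
  · rw [hM, Matrix.mul_inv_rev, Matrix.mul_inv_rev, hDginv, ← mul_assoc]
    calc opNorm (Dg * A⁻¹ * Dg) ≤ opNorm A⁻¹ := opNorm_conj_diag dvec hdv A⁻¹
      _ ≤ 3 * c₃ := hAi
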